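/- A vector γ ∈ ℂ^N satisfies the phase noise geometry constraints γ^H P_l γ = 1 if l = 0 and γ^H P_l γ = 0 for l = 1, …, N−1, if and only if its time-domain samples have constant unit modulus: |Σ_{k=0}^{N−1} γ_k ω^{kn}| = 1 for every n = 0, …, N−1. -/

import Mathlib

open Matrix

/-- The cyclic permutation matrix `P_l = P^l`, with entries `(P_l)_{i,j} = 1` iff
`i ≡ j + l (mod N)`, so that `(P_l y)_i = y_{(i-l) mod N}`. -/
def Pl (N l : ℕ) : Matrix (Fin N) (Fin N) ℂ :=
  Matrix.of fun i j => if ((i : ZMod N) = (j : ZMod N) + (l : ZMod N)) then 1 else 0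


private lemma pow_mod_eq' (ζ : ℂ) (N : ℕ) (h1 : ζ ^ N = 1) (a : ℕ) : ζ ^ a = ζ ^ (a % N) := by
  conv_lhs => rw [← Nat.div_add_mod a N, pow_add, pow_mul, h1, one_pow, one_mul]

private lemma pow_congr_mod' (ζ : ℂ) (N : ℕ) (h1 : ζ ^ N = 1) {a b : ℕ}
    (h : a ≡ b [MOD N]) : ζ ^ a = ζ ^ b := by
  rw [pow_mod_eq' ζ N h1 a, pow_mod_eq' ζ N h1 b, h]

private lemma orth' (N : ℕ) (ζ : ℂ) (hζ : IsPrimitiveRoot ζ N) (k : ℕ) :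
    ∑ n : Fin N, ζ ^ (k * (n:ℕ)) = if N ∣ k then (N : ℂ) else 0 := by
  have h : ∀ n : Fin N, ζ ^ (k * (n:ℕ)) = (ζ ^ k) ^ (n:ℕ) := fun n => by rw [← pow_mul]
  simp_rw [h]
  rw [Fin.sum_univ_eq_sum_range]
  by_cases hd : N ∣ k
  · rw [if_pos hd]
    have : ζ ^ k = 1 := hζ.pow_eq_one_iff_dvd k |>.mpr hd
    simp [this]
  · rw [if_neg hd]
    have h1 : ζ ^ k ≠ 1 := fun h => hd ((hζ.pow_eq_one_iff_dvd k).mp h)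
    have hg := geom_sum_mul (ζ ^ k) N
    rw [← pow_mul, mul_comm k N, pow_mul, hζ.pow_eq_one, one_pow, sub_self] at hg
    rcases mul_eq_zero.mp hg with h | h
    · exact h
    · exact absurd (sub_eq_zero.mp h) h1

private lemma val_modeq' (M : ℕ) (i k : Fin (M+1)) :
    ((i - k : Fin (M+1)) : ℕ) + (k : ℕ) ≡ (i : ℕ) [MOD (M+1)] := by
  have : (i - k) + k = i := sub_add_cancel i k
  calc ((i - k : Fin (M+1)) : ℕ) + (k : ℕ)
      ≡ (((i-k) + k : Fin (M+1)) : ℕ) [MOD (M+1)] := by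
        rw [Fin.add_def]; exact (Nat.mod_modEq _ _).symm
    _ = (i : ℕ) := by rw [this]

private lemma claimA (M : ℕ) (ζ : ℂ) (hζ1 : ζ ^ (M+1) = 1) (hζinv : (starRingEnd ℂ) ζ = ζ⁻¹)
    (γ : Fin (M+1) → ℂ) (n : Fin (M+1)) :
    (starRingEnd ℂ) (∑ k : Fin (M+1), γ k * ζ ^ ((k:ℕ) * (n:ℕ))) *
      (∑ k : Fin (M+1), γ k * ζ ^ ((k:ℕ) * (n:ℕ))) =
    ∑ l : Fin (M+1), (∑ i : Fin (M+1), (starRingEnd ℂ) (γ i) * γ (i - l)) * (ζ⁻¹) ^ ((l:ℕ) * (n:ℕ)) := by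
  have hinv1 : (ζ⁻¹) ^ (M+1) = 1 := by rw [inv_pow, hζ1, inv_one]
  calc (starRingEnd ℂ) (∑ k : Fin (M+1), γ k * ζ ^ ((k:ℕ) * (n:ℕ))) *
      (∑ k : Fin (M+1), γ k * ζ ^ ((k:ℕ) * (n:ℕ)))
      = ∑ i : Fin (M+1), ∑ k : Fin (M+1),
          ((starRingEnd ℂ) (γ i) * (ζ⁻¹) ^ ((i:ℕ) * (n:ℕ))) * (γ k * ζ ^ ((k:ℕ) * (n:ℕ))) := by
        rw [map_sum, Finset.sum_mul_sum]
        simp_rw [_root_.map_mul, map_pow, hζinv]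
    _ = ∑ i : Fin (M+1), ∑ k : Fin (M+1),
          (starRingEnd ℂ) (γ i) * γ k * (ζ⁻¹) ^ (((i - k : Fin (M+1)):ℕ) * (n:ℕ)) := by
        refine Finset.sum_congr rfl fun i _ => Finset.sum_congr rfl fun k _ => ?_
        have hmod : (((i - k : Fin (M+1)):ℕ) + (k:ℕ)) * (n:ℕ) ≡ (i:ℕ) * (n:ℕ) [MOD (M+1)] :=
          (val_modeq' M i k).mul_right _
        have hp : (ζ⁻¹) ^ ((((i - k : Fin (M+1)):ℕ) + (k:ℕ)) * (n:ℕ)) = (ζ⁻¹) ^ ((i:ℕ) * (n:ℕ)) :=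
          pow_congr_mod' _ _ hinv1 hmod
        rw [add_mul, pow_add] at hp
        have hz : ζ ≠ 0 := fun h => by simp [h, zero_pow] at hζ1
        have : (ζ⁻¹) ^ ((k:ℕ) * (n:ℕ)) * ζ ^ ((k:ℕ) * (n:ℕ)) = 1 := by
          rw [inv_pow, inv_mul_cancel₀ (pow_ne_zero _ hz)]
        calc (starRingEnd ℂ) (γ i) * (ζ⁻¹) ^ ((i:ℕ) * (n:ℕ)) * (γ k * ζ ^ ((k:ℕ) * (n:ℕ)))
            = (starRingEnd ℂ) (γ i) * γ k *
              ((ζ⁻¹) ^ ((((i - k : Fin (M+1)):ℕ)) * (n:ℕ)) *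
                ((ζ⁻¹) ^ ((k:ℕ) * (n:ℕ)) * ζ ^ ((k:ℕ) * (n:ℕ)))) := by rw [← hp]; ring
          _ = (starRingEnd ℂ) (γ i) * γ k * (ζ⁻¹) ^ (((i - k : Fin (M+1)):ℕ) * (n:ℕ)) := by
              rw [this, mul_one]
    _ = ∑ l : Fin (M+1), (∑ i : Fin (M+1), (starRingEnd ℂ) (γ i) * γ (i - l)) * (ζ⁻¹) ^ ((l:ℕ) * (n:ℕ)) := by
        simp_rw [Finset.sum_mul]
        conv_rhs => rw [Finset.sum_comm]
        refine Finset.sum_congr rfl fun i _ => ?_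
        refine Fintype.sum_equiv (Equiv.subLeft i)
          (fun k => (starRingEnd ℂ) (γ i) * γ k * (ζ⁻¹) ^ (((i - k : Fin (M+1)):ℕ) * (n:ℕ)))
          (fun l => (starRingEnd ℂ) (γ i) * γ (i - l) * (ζ⁻¹) ^ ((l:ℕ) * (n:ℕ))) fun k => ?_
        simp [Equiv.subLeft, sub_sub_cancel]

private lemma cond_iff' (M : ℕ) (i j l : Fin (M+1)) :
    (((i:ℕ) : ZMod (M+1)) = ((j:ℕ) : ZMod (M+1)) + ((l:ℕ) : ZMod (M+1))) ↔ j = i - l := by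
  rw [eq_comm, eq_sub_iff_add_eq (G := Fin (M+1))]
  rw [← Nat.cast_add, ZMod.natCast_eq_natCast_iff, eq_comm]
  rw [Fin.ext_iff, Fin.add_def]
  unfold Nat.ModEq
  rw [Nat.mod_eq_of_lt i.isLt]
  exact comm

private lemma Peq (M : ℕ) (γ : Fin (M+1) → ℂ) (l : Fin (M+1)) :
    star γ ⬝ᵥ (Pl (M+1) (l : ℕ) *ᵥ γ) = ∑ i : Fin (M+1), (starRingEnd ℂ) (γ i) * γ (i - l) := by
  simp only [dotProduct, mulVec, Pl, of_apply, Pi.star_apply, Complex.star_def]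
  refine Finset.sum_congr rfl fun i _ => ?_
  congr 1
  simp_rw [cond_iff' M i _ l, ite_mul, one_mul, zero_mul]
  rw [Finset.sum_ite_eq' Finset.univ (i - l) γ]
  simp

private lemma claimB (M : ℕ) (ζ : ℂ) (hζ : IsPrimitiveRoot ζ (M+1))
    (hζinv : (starRingEnd ℂ) ζ = ζ⁻¹) (γ : Fin (M+1) → ℂ) (l : Fin (M+1)) :
    (((M:ℂ)+1)) * (∑ i : Fin (M+1), (starRingEnd ℂ) (γ i) * γ (i - l)) =
      ∑ n : Fin (M+1), ((starRingEnd ℂ) (∑ k : Fin (M+1), γ k * ζ ^ ((k:ℕ) * (n:ℕ))) *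
        (∑ k : Fin (M+1), γ k * ζ ^ ((k:ℕ) * (n:ℕ)))) * ζ ^ ((l:ℕ) * (n:ℕ)) := by
  have hζ1 : ζ ^ (M+1) = 1 := hζ.pow_eq_one
  calc (((M:ℂ)+1)) * (∑ i : Fin (M+1), (starRingEnd ℂ) (γ i) * γ (i - l))
      = ∑ l' : Fin (M+1), (∑ i : Fin (M+1), (starRingEnd ℂ) (γ i) * γ (i - l')) *
          (if l' = l then ((M:ℂ)+1) else 0) := by
        simp_rw [mul_ite, mul_zero]
        rw [Finset.sum_ite_eq' Finset.univ l
          (fun l' => (∑ i : Fin (M+1), (starRingEnd ℂ) (γ i) * γ (i - l')) * (((M:ℂ)+1)))]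
        simp [mul_comm]
    _ = ∑ l' : Fin (M+1), (∑ i : Fin (M+1), (starRingEnd ℂ) (γ i) * γ (i - l')) *
          ∑ n : Fin (M+1), (ζ⁻¹) ^ ((l':ℕ) * (n:ℕ)) * ζ ^ ((l:ℕ) * (n:ℕ)) := by
        refine Finset.sum_congr rfl fun l' _ => ?_
        congr 1
        have key : ∀ n : Fin (M+1), (ζ⁻¹) ^ ((l':ℕ) * (n:ℕ)) * ζ ^ ((l:ℕ) * (n:ℕ)) =
            ζ ^ ((((l:ℕ) + ((M+1) - (l':ℕ))) * (n:ℕ))) := by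
          intro n
          have hle : (l':ℕ) ≤ M+1 := Nat.le_of_lt l'.isLt
          have h1 : ζ ^ ((((M+1) - (l':ℕ))) * (n:ℕ)) * ζ ^ ((l':ℕ) * (n:ℕ)) = 1 := by
            rw [← pow_add, ← add_mul, Nat.sub_add_cancel hle, pow_mul, hζ1, one_pow]
          have h2 : (ζ⁻¹) ^ ((l':ℕ) * (n:ℕ)) = ζ ^ ((((M+1) - (l':ℕ))) * (n:ℕ)) := by
            rw [inv_pow]
            exact inv_eq_of_mul_eq_one_left h1
          rw [h2, ← pow_add, ← add_mul, Nat.add_comm ((M+1) - (l':ℕ)) (l:ℕ)]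
        simp_rw [key]
        rw [orth' (M+1) ζ hζ ((l:ℕ) + ((M+1) - (l':ℕ)))]
        have hlt : (l:ℕ) < M+1 := l.isLt
        have hlt' : (l':ℕ) < M+1 := l'.isLt
        by_cases he : l' = l
        · subst he
          have hv : (l':ℕ) + ((M+1) - (l':ℕ)) = M+1 := by omega
          rw [hv, if_pos (dvd_refl _), if_pos rfl]
          push_cast; ring
        · have hnd : ¬ (M+1) ∣ (l:ℕ) + ((M+1) - (l':ℕ)) := by
            rintro ⟨c, hc⟩
            have hub : (l:ℕ) + ((M+1) - (l':ℕ)) < (M+1) * 2 := by omega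
            rw [hc] at hub
            have hc2 : c < 2 := lt_of_mul_lt_mul_left hub (Nat.zero_le _)
            have hv : (l:ℕ) = (l':ℕ) := by interval_cases c <;> omega
            exact he (Fin.ext hv.symm)
          rw [if_neg hnd, if_neg he]
    _ = ∑ n : Fin (M+1), ((starRingEnd ℂ) (∑ k : Fin (M+1), γ k * ζ ^ ((k:ℕ) * (n:ℕ))) *
        (∑ k : Fin (M+1), γ k * ζ ^ ((k:ℕ) * (n:ℕ)))) * ζ ^ ((l:ℕ) * (n:ℕ)) := by
        simp_rw [claimA M ζ hζ1 hζinv γ]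
        conv_rhs => enter [2, n]; rw [Finset.sum_mul]
        conv_rhs => rw [Finset.sum_comm]
        conv_lhs => enter [2, l']; rw [Finset.mul_sum]
        refine Finset.sum_congr rfl fun l' _ => Finset.sum_congr rfl fun n _ => by ring

/-- A vector `γ ∈ ℂ^N` satisfies the phase noise geometry constraints
(`γᴴ P_0 γ = 1`, `γᴴ P_l γ = 0` for `l = 1, …, N-1`) iff its time-domain samples
have constant unit modulus: `|∑_k γ_k ω^{kn}| = 1` for every `n`. -/
theorem stmt5 (N : ℕ) (hN : 0 < N) (ω : ℂ)
    (hω : ω = Complex.exp (2 * (Real.pi : ℂ) * Complex.I / N))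
    (γ : Fin N → ℂ) :
    (∀ l : Fin N, star γ ⬝ᵥ (Pl N (l : ℕ) *ᵥ γ) = if (l : ℕ) = 0 then 1 else 0) ↔
      ∀ n : Fin N, ‖∑ k : Fin N, γ k * ω ^ ((k : ℕ) * (n : ℕ))‖ = 1 := by
  obtain ⟨M, rfl⟩ : ∃ M, N = M + 1 := ⟨N - 1, (Nat.succ_pred_eq_of_pos hN).symm⟩
  have hprim : IsPrimitiveRoot ω (M+1) := by
    rw [hω]; exact_mod_cast Complex.isPrimitiveRoot_exp (M+1) (Nat.succ_ne_zero M)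
  have hζ1 : ω ^ (M+1) = 1 := hprim.pow_eq_one
  have habs : ‖ω‖ = 1 := Complex.norm_eq_one_of_pow_eq_one hζ1 (Nat.succ_ne_zero M)
  have hζinv : (starRingEnd ℂ) ω = ω⁻¹ := (Complex.inv_eq_conj habs).symm
  constructor
  · intro h n
    have hA := claimA M ω hζ1 hζinv γ n
    have hc : ∀ l : Fin (M+1), (∑ i : Fin (M+1), (starRingEnd ℂ) (γ i) * γ (i - l)) =
        if (l:ℕ) = 0 then 1 else 0 := fun l => by rw [← Peq M γ l]; exact h l
    simp_rw [hc] at hA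
    have hsum : ∑ l : Fin (M+1), (if (l:ℕ) = 0 then (1:ℂ) else 0) * (ω⁻¹) ^ ((l:ℕ) * (n:ℕ)) = 1 := by
      rw [Finset.sum_eq_single 0]
      · simp
      · intro l _ hl
        have hv : (l:ℕ) ≠ 0 := fun h0 => hl (Fin.ext (by rw [h0]; rfl))
        rw [if_neg hv, zero_mul]
      · simp
    rw [hsum] at hA
    have hns : (Complex.normSq (∑ k : Fin (M+1), γ k * ω ^ ((k:ℕ) * (n:ℕ))) : ℂ) = 1 := by
      rw [Complex.normSq_eq_conj_mul_self]; exact hA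
    have hns' : Complex.normSq (∑ k : Fin (M+1), γ k * ω ^ ((k:ℕ) * (n:ℕ))) = 1 := by
      exact_mod_cast hns
    rw [Complex.norm_def, hns', Real.sqrt_one]
  · intro h l
    rw [Peq M γ l]
    have hB := claimB M ω hprim hζinv γ l
    have h1 : ∀ n : Fin (M+1),
        (starRingEnd ℂ) (∑ k : Fin (M+1), γ k * ω ^ ((k:ℕ) * (n:ℕ))) *
          (∑ k : Fin (M+1), γ k * ω ^ ((k:ℕ) * (n:ℕ))) = 1 := fun n => by
      rw [← Complex.normSq_eq_conj_mul_self, Complex.normSq_eq_norm_sq, h n]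
      norm_num
    simp_rw [h1, one_mul] at hB
    rw [orth' (M+1) ω hprim (l:ℕ)] at hB
    have hNne : ((M:ℂ)+1) ≠ 0 := by
      have := Nat.cast_add_one_ne_zero (R := ℂ) M
      exact_mod_cast this
    by_cases h0 : (l:ℕ) = 0
    · rw [if_pos h0]
      rw [if_pos (by simp [h0] : (M+1) ∣ (l:ℕ))] at hB
      push_cast at hB
      exact mul_left_cancel₀ hNne (by rw [hB, mul_one])
    · rw [if_neg h0]
      have hnd : ¬ (M+1) ∣ (l:ℕ) := fun hd => h0 (Nat.eq_zero_of_dvd_of_lt hd l.isLt)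
      rw [if_neg hnd] at hB
      exact (mul_eq_zero.mp hB).resolve_left hNne
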